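/- Under the hypotheses |U₁| = |U₂| and U·conj(U₁) + conj(U)·U₂ = 0 with ε = 1, the matrix [[U₁, U],[U, U₂]] is invertible whenever (U, U₁, U₂) ≠ (0,0,0). -/

import Mathlib

/-- Under the hypotheses `|U₁| = |U₂|` and `U·conj(U₁) + conj(U)·U₂ = 0` with `ε = 1`,
the matrix `[[U₁, U],[U, U₂]]` is invertible whenever `(U, U₁, U₂) ≠ (0,0,0)`:
its determinant `U₁U₂ - U²` is nonzero. -/
theorem definite_case_nondegenerate
    (U U₁ U₂ : ℂ)
    (h1 : ‖U₁‖ = ‖U₂‖)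
    (h2 : U * (starRingEnd ℂ) U₁ + (starRingEnd ℂ) U * U₂ = 0)
    (hne : ¬ (U = 0 ∧ U₁ = 0 ∧ U₂ = 0)) :
    U₁ * U₂ - U ^ 2 ≠ 0 := by
  intro h
  have hprod : U₁ * U₂ = U ^ 2 := by linear_combination h
  by_cases hU : U = 0
  · subst hU
    have h0 : U₁ * U₂ = 0 := by simpa using hprod
    rcases mul_eq_zero.mp h0 with h1' | h2'
    · have : U₂ = 0 := by
        have := h1; rw [h1', norm_zero] at this
        exact (norm_eq_zero.mp this.symm)
      exact hne ⟨rfl, h1', this⟩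
    · have : U₁ = 0 := by
        have := h1; rw [h2', norm_zero] at this
        exact (norm_eq_zero.mp this)
      exact hne ⟨rfl, this, h2'⟩
  · have key : U₂ * ((starRingEnd ℂ) U₁ * U₁ + (starRingEnd ℂ) U * U) = 0 := by
      linear_combination (starRingEnd ℂ) U₁ * h + U * h2
    have hpos : ((starRingEnd ℂ) U₁ * U₁ + (starRingEnd ℂ) U * U) ≠ 0 := by
      have e1 : (starRingEnd ℂ) U₁ * U₁ = (Complex.normSq U₁ : ℂ) := by
        rw [mul_comm, Complex.mul_conj]
      have e2 : (starRingEnd ℂ) U * U = (Complex.normSq U : ℂ) := by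
        rw [mul_comm, Complex.mul_conj]
      rw [e1, e2]
      intro hc
      have : (Complex.normSq U₁ + Complex.normSq U : ℝ) = 0 := by
        exact_mod_cast hc
      have hU2 : Complex.normSq U = 0 := by
        nlinarith [Complex.normSq_nonneg U₁, Complex.normSq_nonneg U]
      exact hU (Complex.normSq_eq_zero.mp hU2)
    have hU₂ : U₂ = 0 := by
      rcases mul_eq_zero.mp key with h' | h'
      · exact h'
      · exact absurd h' hpos
    have hU₁ : U₁ = 0 := by
      have := h1; rw [hU₂, norm_zero] at this
      exact norm_eq_zero.mp this
    rw [hU₁, hU₂] at hprod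
    simp at hprod; exact hU (pow_eq_zero_iff (two_ne_zero) |>.mp hprod.symm)
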